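/- arXiv:2602.16300 — 2 statements merged into one kernel-verified Lean document; each statement's English description precedes it below -/
import Mathlib

section
/- For every m ≥ 1 there is an unweighted directed graph D of order 2m+1, namely the graph on vertices {a₁,…,a_m, b₁,…,b_{m+1}} with an edge from b_i to a_j whenever i ≥ j and an edge from a_i to b_{i+1} for each 1 ≤ i ≤ m, such that b₁ is the only vertex with directed paths to all other vertices, and ept_rzf(D, b₁) = m + Σ_{i=1}^m (m+2−i) = m(m+5)/2. In particular there exist directed graphs of order n whose minimum expected propagation time from a single vertex is Ω(n²). -/
open scoped ENNReal NNReal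

namespace RZF

variable {V : Type*} [Fintype V] [DecidableEq V]

/-- Probability that the white vertex `x` turns blue in one round of weighted
randomized zero forcing with weights `w`, given the current blue set `B`
(`0` when the total incoming weight of `x` is `0`). -/
noncomputable def turnProb (w : V → V → ℝ≥0) (B : Finset V) (x : V) : ℝ≥0 :=
  (∑ u ∈ B, w u x) / ∑ u, w u x

/-- One-round transition probability of the RZF Markov chain from blue set `B`
to blue set `C`: each white vertex independently turns blue with probability
`turnProb w B ·`, and blue vertices stay blue. -/
noncomputable def stepProb (w : V → V → ℝ≥0) (B C : Finset V) : ℝ≥0∞ :=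
  if B ⊆ C then
    (∏ x ∈ C \ B, (turnProb w B x : ℝ≥0∞)) *
      ∏ x ∈ Cᶜ, (1 - (turnProb w B x : ℝ≥0∞))
  else 0

/-- Distribution of the blue set after `t` rounds, started from `S`. -/
noncomputable def state (w : V → V → ℝ≥0) (S : Finset V) : ℕ → Finset V → ℝ≥0∞
  | 0 => fun C => if C = S then 1 else 0
  | t + 1 => fun C => ∑ B : Finset V, state w S t B * stepProb w B C

/-- Expected propagation time `∑ₜ P(Bₜ ≠ V(G))`; this equals `E[τ]` when the
all-blue state is reachable from `S`, and `∞` otherwise. -/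
noncomputable def ept (w : V → V → ℝ≥0) (S : Finset V) : ℝ≥0∞ :=
  ∑' t : ℕ, ∑ C ∈ Finset.univ.filter (fun C : Finset V => C ≠ Finset.univ),
    state w S t C

/-- Minimum expected propagation time over singleton starting sets. -/
noncomputable def eptMin (w : V → V → ℝ≥0) : ℝ≥0∞ :=
  ⨅ v : V, ept w {v}

/-- The weight function of an unweighted directed graph: weight `1` on each
edge and `0` otherwise, so that `turnProb` is the fraction of in-neighbors
that are blue. -/
def unweight (adj : V → V → Prop) [DecidableRel adj] : V → V → ℝ≥0 :=
  fun u v => if adj u v then 1 else 0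

end RZF

/-- `reachIn adj t a b` : there is a directed path of length at most `t`
from `a` to `b` in the directed graph with adjacency relation `adj`. -/
def reachIn {V : Type*} (adj : V → V → Prop) : ℕ → V → V → Prop
  | 0, a, b => a = b
  | t + 1, a, b => reachIn adj t a b ∨ ∃ c, reachIn adj t a c ∧ adj c b

/-- The unweighted directed graph `D` of order `2m + 1` on vertices
`a₁, …, a_m` (`Sum.inl`) and `b₁, …, b_{m+1}` (`Sum.inr`), with an edge from
`bᵢ` to `aⱼ` whenever `i ≥ j` and an edge from `aᵢ` to `bᵢ₊₁` for each `i`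
(each edge has weight `1`). -/
noncomputable def dWeight (m : ℕ) :
    (Fin m ⊕ Fin (m + 1)) → (Fin m ⊕ Fin (m + 1)) → ℝ≥0
  | Sum.inr i, Sum.inl j => if (j : ℕ) ≤ (i : ℕ) then 1 else 0
  | Sum.inl i, Sum.inr j => if (j : ℕ) = (i : ℕ) + 1 then 1 else 0
  | _, _ => 0

namespace RZFAux
open RZF Finset
variable {V : Type*} [Fintype V] [DecidableEq V]

lemma stepProb_self_point (w : V → V → ℝ≥0) (B : Finset V) (x0 : V) (hx : x0 ∉ B)
    (h0 : ∀ x, x ∉ B → x ≠ x0 → turnProb w B x = 0) :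
    stepProb w B B = 1 - (turnProb w B x0 : ℝ≥0∞) := by
  unfold stepProb
  rw [if_pos (subset_refl B), Finset.sdiff_self, Finset.prod_empty, one_mul]
  rw [Finset.prod_eq_single x0]
  · intro b hb hne
    rw [h0 b (by simpa using hb) hne]
    simp
  · intro h
    exact absurd (Finset.mem_compl.mpr hx) h

lemma stepProb_next_point (w : V → V → ℝ≥0) (B : Finset V) (x0 : V) (hx : x0 ∉ B)
    (h0 : ∀ x, x ∉ B → x ≠ x0 → turnProb w B x = 0) :
    stepProb w B (insert x0 B) = (turnProb w B x0 : ℝ≥0∞) := by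
  unfold stepProb
  rw [if_pos (Finset.subset_insert _ _)]
  have hd : insert x0 B \ B = {x0} := by
    ext y
    simp only [Finset.mem_sdiff, Finset.mem_insert, Finset.mem_singleton]
    constructor
    · rintro ⟨h1 | h1, h2⟩
      · exact h1
      · exact absurd h1 h2
    · rintro rfl; exact ⟨Or.inl rfl, hx⟩
  rw [hd, Finset.prod_singleton]
  rw [Finset.prod_eq_one, mul_one]
  intro x hxc
  simp only [Finset.mem_compl, Finset.mem_insert, not_or] at hxc
  rw [h0 x hxc.2 hxc.1]
  simp

lemma stepProb_other_point (w : V → V → ℝ≥0) (B : Finset V) (x0 : V) (hx : x0 ∉ B)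
    (h0 : ∀ x, x ∉ B → x ≠ x0 → turnProb w B x = 0) (C : Finset V) (hC1 : C ≠ B) (hC2 : C ≠ insert x0 B) :
    stepProb w B C = 0 := by
  unfold stepProb
  by_cases hBC : B ⊆ C
  · rw [if_pos hBC]
    by_cases hex : ∃ x ∈ C \ B, x ≠ x0
    · obtain ⟨x, hxm, hxne⟩ := hex
      have hxB : x ∉ B := (Finset.mem_sdiff.mp hxm).2
      have hz : (turnProb w B x : ℝ≥0∞) = 0 := by
        rw [h0 x hxB hxne]; simp
      rw [Finset.prod_eq_zero hxm hz, zero_mul]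
    · push_neg at hex
      exfalso
      have hsub : C ⊆ insert x0 B := by
        intro y hy
        by_cases hyB : y ∈ B
        · exact Finset.mem_insert_of_mem hyB
        · have := hex y (Finset.mem_sdiff.mpr ⟨hy, hyB⟩)
          subst this; exact Finset.mem_insert_self _ _
      by_cases hx0C : x0 ∈ C
      · exact hC2 (Finset.Subset.antisymm hsub (Finset.insert_subset hx0C hBC))
      · apply hC1
        apply Finset.Subset.antisymm _ hBC
        intro y hy
        rcases Finset.mem_insert.mp (hsub hy) with rfl | h
        · exact absurd hy hx0C
        · exact h
  · rw [if_neg hBC]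

lemma stepProb_univ (w : V → V → ℝ≥0) (C : Finset V) :
    stepProb w Finset.univ C = if C = Finset.univ then 1 else 0 := by
  unfold stepProb
  by_cases h : C = Finset.univ
  · subst h
    simp
  · rw [if_neg h, if_neg (fun hs => h (Finset.univ_subset_iff.mp hs))]


noncomputable def mu (n : ℕ) (p : ℕ → ℝ≥0∞) : ℕ → ℕ → ℝ≥0∞
  | 0, k => if k = 0 then 1 else 0
  | t+1, 0 => mu n p t 0 * (if 0 < n then 1 - p 0 else 1)
  | t+1, (k+1) => mu n p t (k+1) * (if k+1 < n then 1 - p (k+1) else 1) + mu n p t k * p k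

lemma tsum_shift (s : ℕ) (h : ℕ → ℝ≥0∞) :
    ∑' t, (if s < t then h (t - 1 - s) else 0) = ∑' u, h u := by
  have hg : Function.Injective (fun u : ℕ => u + s + 1) := fun a b hab => by
    simpa using hab
  have hsupp : Function.support (fun t => if s < t then h (t - 1 - s) else 0) ⊆
      Set.range (fun u : ℕ => u + s + 1) := by
    intro t ht
    simp only [Function.mem_support] at ht
    rcases lt_or_ge s t with hlt | hle
    · exact ⟨t - s - 1, show t - s - 1 + s + 1 = t by omega⟩
    · exact absurd (if_neg (by omega)) ht
  rw [← Function.Injective.tsum_eq hg hsupp]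
  apply tsum_congr
  intro u
  rw [if_pos (by omega)]
  congr 1
  omega

lemma tsum_range_swap (h : ℕ → ℕ → ℝ≥0∞) :
    ∑' t, ∑ s ∈ Finset.range t, h s (t - 1 - s) = ∑' s, ∑' u, h s u := by
  have step1 : ∀ t, ∑ s ∈ Finset.range t, h s (t - 1 - s)
      = ∑' s, (if s < t then h s (t - 1 - s) else 0) := by
    intro t
    rw [tsum_eq_sum (s := Finset.range t) (fun b hb => if_neg (by simpa using hb))]
    exact Finset.sum_congr rfl fun s hs => (if_pos (Finset.mem_range.mp hs)).symm
  calc ∑' t, ∑ s ∈ Finset.range t, h s (t - 1 - s)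
      = ∑' t, ∑' s, (if s < t then h s (t - 1 - s) else 0) := tsum_congr step1
    _ = ∑' s, ∑' t, (if s < t then h s (t - 1 - s) else 0) := ENNReal.tsum_comm
    _ = ∑' s, ∑' u, h s u := tsum_congr fun s => tsum_shift s (h s)

lemma mu_tsum (n : ℕ) (p : ℕ → ℝ≥0∞)
    (hp0 : ∀ k, k < n → p k ≠ 0) (hp1 : ∀ k, k < n → p k ≤ 1) :
    ∀ k, k < n → ∑' t, mu n p t k = (p k)⁻¹ := by
  intro k
  induction k with
  | zero =>
    intro hk
    have hmu : ∀ t, mu n p t 0 = (1 - p 0) ^ t := by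
      intro t
      induction t with
      | zero => simp [mu]
      | succ t ih => rw [pow_succ, ← ih]; simp [mu, if_pos hk]
    rw [tsum_congr hmu, ENNReal.tsum_geometric,
      ENNReal.sub_sub_cancel ENNReal.one_ne_top (hp1 0 hk)]
  | succ k ih =>
    intro hk
    have hkn : k < n := by omega
    have hpk_top : p k ≠ ⊤ := fun h => by
      have := hp1 k hkn; rw [h] at this; exact absurd this (by simp)
    have hconv : ∀ t, mu n p t (k+1)
        = ∑ s ∈ Finset.range t, (1 - p (k+1)) ^ (t - 1 - s) * (mu n p s k * p k) := by
      intro t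
      induction t with
      | zero => simp [mu]
      | succ t iht =>
        show mu n p t (k+1) * (if k+1 < n then 1 - p (k+1) else 1) + mu n p t k * p k = _
        rw [if_pos hk, iht, Finset.sum_mul, Finset.sum_range_succ]
        congr 1
        · apply Finset.sum_congr rfl
          intro s hs
          rw [mul_right_comm, mul_comm ((1 - p (k+1)) ^ (t-1-s)) (1 - p (k+1)), ← pow_succ']
          congr 2
          have := Finset.mem_range.mp hs
          omega
        · rw [show t + 1 - 1 - t = 0 from by omega, pow_zero, one_mul]
    rw [tsum_congr hconv, tsum_range_swap (fun s u => (1 - p (k+1)) ^ u * (mu n p s k * p k))]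
    have inner : ∀ s, ∑' u, (1 - p (k+1)) ^ u * (mu n p s k * p k)
        = (p (k+1))⁻¹ * (mu n p s k * p k) := by
      intro s
      rw [ENNReal.tsum_mul_right, ENNReal.tsum_geometric,
        ENNReal.sub_sub_cancel ENNReal.one_ne_top (hp1 _ hk)]
    rw [tsum_congr inner, ENNReal.tsum_mul_left, ENNReal.tsum_mul_right, ih hkn,
      ENNReal.inv_mul_cancel (hp0 k hkn) hpk_top, mul_one]


lemma ept_chain (w : V → V → ℝ≥0) (n : ℕ) (D : ℕ → Finset V) (p : ℕ → ℝ≥0∞)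
    (hDn : D n = Finset.univ)
    (hinj : ∀ k, k ≤ n → ∀ l, l ≤ n → D k = D l → k = l)
    (hp0 : ∀ k, k < n → p k ≠ 0) (hp1 : ∀ k, k < n → p k ≤ 1)
    (hself : ∀ k, k < n → stepProb w (D k) (D k) = 1 - p k)
    (hnext : ∀ k, k < n → stepProb w (D k) (D (k+1)) = p k)
    (hother : ∀ k, k < n → ∀ C, C ≠ D k → C ≠ D (k+1) → stepProb w (D k) C = 0) :
    ept w (D 0) = ∑ k ∈ Finset.range n, (p k)⁻¹ := by
  have hne : ∀ k, k < n → D k ≠ Finset.univ := fun k hk h => by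
    have := hinj k hk.le n le_rfl (h.trans hDn.symm); omega
  -- self-transition of D k for all k ≤ n
  have hself' : ∀ k, k ≤ n → stepProb w (D k) (D k)
      = (if k < n then 1 - p k else 1) := by
    intro k hk
    by_cases h : k < n
    · rw [if_pos h]; exact hself k h
    · have hkn : k = n := by omega
      subst hkn
      rw [if_neg h, hDn, stepProb_univ, if_pos rfl]
  have hzero : ∀ k, k ≤ n → ∀ C, C ≠ D k → (k < n → C ≠ D (k+1)) →
      stepProb w (D k) C = 0 := by
    intro k hk C h1 h2
    by_cases h : k < n
    · exact hother k h C h1 (h2 h)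
    · have hkn : k = n := by omega
      subst hkn
      rw [hDn, stepProb_univ, if_neg (fun hC => h1 (hC.trans hDn.symm))]
  -- the state formula
  have hstate : ∀ t C, state w (D 0) t C
      = ∑ k ∈ Finset.range (n+1), (if C = D k then mu n p t k else 0) := by
    intro t
    induction t with
    | zero =>
      intro C
      rw [Finset.sum_eq_single_of_mem 0 (by simp) (fun k _ hk0 => by simp [mu, hk0])]
      simp [state, mu]
    | succ t ih =>
      intro C
      have expand : state w (D 0) (t+1) C
          = ∑ k ∈ Finset.range (n+1), mu n p t k * stepProb w (D k) C := by
        show (∑ B : Finset V, state w (D 0) t B * stepProb w B C) = _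
        calc ∑ B : Finset V, state w (D 0) t B * stepProb w B C
            = ∑ B : Finset V, ∑ k ∈ Finset.range (n+1),
                (if B = D k then mu n p t k * stepProb w B C else 0) := by
              apply Finset.sum_congr rfl
              intro B _
              rw [ih B, Finset.sum_mul]
              apply Finset.sum_congr rfl
              intro k _
              rw [ite_mul, zero_mul]
          _ = ∑ k ∈ Finset.range (n+1), ∑ B : Finset V,
                (if B = D k then mu n p t k * stepProb w B C else 0) :=
              Finset.sum_comm
          _ = ∑ k ∈ Finset.range (n+1), mu n p t k * stepProb w (D k) C := by
              apply Finset.sum_congr rfl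
              intro k _
              rw [Finset.sum_ite_eq' Finset.univ (D k)
                (fun B => mu n p t k * stepProb w B C), if_pos (Finset.mem_univ _)]
      rw [expand]
      by_cases hC : ∃ j, j ≤ n ∧ C = D j
      · obtain ⟨j, hj, rfl⟩ := hC
        have hRHS : ∑ k ∈ Finset.range (n+1), (if D j = D k then mu n p (t+1) k else 0)
            = mu n p (t+1) j := by
          rw [Finset.sum_eq_single_of_mem j (Finset.mem_range.mpr (by omega))]
          · rw [if_pos rfl]
          · intro k hk hkj
            have hkn : k ≤ n := Nat.lt_succ_iff.mp (Finset.mem_range.mp hk)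
            exact if_neg (fun h => hkj (hinj k hkn j hj h.symm))
        rw [hRHS]
        rcases j with _ | j
        · rw [Finset.sum_eq_single_of_mem 0 (by simp)]
          · rw [hself' 0 (by omega)]
            show _ = mu n p t 0 * (if 0 < n then 1 - p 0 else 1)
            rfl
          · intro k hk hk0
            have hkn : k ≤ n := Nat.lt_succ_iff.mp (Finset.mem_range.mp hk)
            rw [hzero k hkn (D 0)
              (fun h => hk0 (hinj 0 (by omega) k hkn h).symm)
              (fun h hh => by have := hinj 0 (by omega) (k+1) (by omega) hh; omega),
              mul_zero]
        · rw [Finset.sum_eq_add (j+1) j (by omega)]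
          · rw [hself' (j+1) hj, hnext j (by omega)]
            rfl
          · rintro c hc ⟨hc1, hc2⟩
            have hcn : c ≤ n := Nat.lt_succ_iff.mp (Finset.mem_range.mp hc)
            rw [hzero c hcn (D (j+1))
              (fun h => hc1 (hinj (j+1) hj c hcn h).symm)
              (fun h hh => hc2 (by have := hinj (j+1) hj (c+1) (by omega) hh; omega)),
              mul_zero]
          · intro h; exact absurd (Finset.mem_range.mpr (by omega)) h
          · intro h; exact absurd (Finset.mem_range.mpr (by omega)) h
      · push_neg at hC
        rw [Finset.sum_eq_zero, Finset.sum_eq_zero]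
        · intro k hk
          rw [if_neg (hC k (Nat.lt_succ_iff.mp (Finset.mem_range.mp hk)))]
        · intro k hk
          have hkn : k ≤ n := Nat.lt_succ_iff.mp (Finset.mem_range.mp hk)
          rw [hzero k hkn C (hC k hkn) (fun h => hC (k+1) (by omega)), mul_zero]
  -- per-round mass off the absorbing state
  have hround : ∀ t, (∑ C ∈ Finset.univ.filter (fun C : Finset V => C ≠ Finset.univ),
      state w (D 0) t C) = ∑ k ∈ Finset.range n, mu n p t k := by
    intro t
    calc (∑ C ∈ Finset.univ.filter (fun C : Finset V => C ≠ Finset.univ),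
          state w (D 0) t C)
        = ∑ C ∈ Finset.univ.filter (fun C : Finset V => C ≠ Finset.univ),
            ∑ k ∈ Finset.range (n+1), (if C = D k then mu n p t k else 0) :=
          Finset.sum_congr rfl fun C _ => hstate t C
      _ = ∑ k ∈ Finset.range (n+1),
            ∑ C ∈ Finset.univ.filter (fun C : Finset V => C ≠ Finset.univ),
              (if C = D k then mu n p t k else 0) := Finset.sum_comm
      _ = ∑ k ∈ Finset.range (n+1),
            (if D k ∈ Finset.univ.filter (fun C : Finset V => C ≠ Finset.univ)
              then mu n p t k else 0) :=
          Finset.sum_congr rfl fun k _ => Finset.sum_ite_eq' _ (D k) (fun _ => mu n p t k)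
      _ = ∑ k ∈ Finset.range n, mu n p t k := by
          have hnm : D n ∉ Finset.univ.filter (fun C : Finset V => C ≠ Finset.univ) := by
            simp [hDn]
          rw [Finset.sum_range_succ, if_neg hnm, add_zero]
          apply Finset.sum_congr rfl
          intro k hk
          have hm : D k ∈ Finset.univ.filter (fun C : Finset V => C ≠ Finset.univ) :=
            Finset.mem_filter.mpr ⟨Finset.mem_univ _, hne k (Finset.mem_range.mp hk)⟩
          rw [if_pos hm]
  show (∑' t : ℕ, ∑ C ∈ Finset.univ.filter (fun C : Finset V => C ≠ Finset.univ),
      state w (D 0) t C) = _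
  rw [tsum_congr hround, Summable.tsum_finsetSum (fun i _ => ENNReal.summable)]
  exact Finset.sum_congr rfl fun k hk => mu_tsum n p hp0 hp1 k (Finset.mem_range.mp hk)

end RZFAux

namespace RZFAux
open RZF Finset

def dPred (m k : ℕ) : Fin m ⊕ Fin (m+1) → Prop
  | Sum.inl j => (j : ℕ) < (k+1)/2
  | Sum.inr i => (i : ℕ) < k/2 + 1

instance dPredDec (m k : ℕ) : DecidablePred (dPred m k) := fun v => by
  cases v with
  | inl j => exact decidable_of_iff ((j : ℕ) < (k+1)/2) Iff.rfl
  | inr i => exact decidable_of_iff ((i : ℕ) < k/2 + 1) Iff.rfl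

def dSet (m k : ℕ) : Finset (Fin m ⊕ Fin (m+1)) := Finset.univ.filter (dPred m k)

lemma mem_dSet_inl {m k : ℕ} (j : Fin m) :
    Sum.inl j ∈ dSet m k ↔ (j : ℕ) < (k+1)/2 := by
  simp [dSet, dPred]

lemma mem_dSet_inr {m k : ℕ} (i : Fin (m+1)) :
    Sum.inr i ∈ dSet m k ↔ (i : ℕ) < k/2 + 1 := by
  simp [dSet, dPred]

lemma count_nnreal (n a c : ℕ) :
    (∑ i ∈ Finset.range n, if a ≤ i ∧ i < c then (1:ℝ≥0) else 0)
      = ((min c n - a : ℕ) : ℝ≥0) := by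
  induction n with
  | zero => simp
  | succ n ih =>
    rw [Finset.sum_range_succ, ih]
    by_cases h : a ≤ n ∧ n < c
    · rw [if_pos h]
      have h2 : min c (n+1) - a = (min c n - a) + 1 := by omega
      rw [h2, Nat.cast_add, Nat.cast_one]
    · rw [if_neg h, add_zero]
      congr 1
      omega

lemma denom_inl (m : ℕ) (j : Fin m) :
    (∑ u, dWeight m u (Sum.inl j)) = ((m + 1 - (j:ℕ) : ℕ) : ℝ≥0) := by
  rw [Fintype.sum_sum_type]
  have h1 : (∑ i : Fin m, dWeight m (Sum.inl i) (Sum.inl j)) = 0 := by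
    simp [dWeight]
  rw [h1, zero_add]
  have h2 : ∀ i : Fin (m+1), dWeight m (Sum.inr i) (Sum.inl j)
      = (if (j:ℕ) ≤ (i:ℕ) ∧ (i:ℕ) < m+1 then (1:ℝ≥0) else 0) := by
    intro i
    have : (i:ℕ) < m+1 := i.isLt
    simp only [dWeight, this, and_true]
  rw [Finset.sum_congr rfl (fun i _ => h2 i),
    Fin.sum_univ_eq_sum_range (fun i => if (j:ℕ) ≤ i ∧ i < m+1 then (1:ℝ≥0) else 0),
    count_nnreal]
  congr 1
  omega

lemma numer_inl (m k : ℕ) (j : Fin m) :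
    (∑ u ∈ dSet m k, dWeight m u (Sum.inl j))
      = ((min (k/2+1) (m+1) - (j:ℕ) : ℕ) : ℝ≥0) := by
  rw [dSet, Finset.sum_filter, Fintype.sum_sum_type]
  have h1 : (∑ i : Fin m, if dPred m k (Sum.inl i)
      then dWeight m (Sum.inl i) (Sum.inl j) else 0) = 0 := by
    apply Finset.sum_eq_zero
    intro i _
    simp [dWeight]
  rw [h1, zero_add]
  have h2 : ∀ i : Fin (m+1), (if dPred m k (Sum.inr i)
        then dWeight m (Sum.inr i) (Sum.inl j) else 0)
      = (if (j:ℕ) ≤ (i:ℕ) ∧ (i:ℕ) < k/2+1 then (1:ℝ≥0) else 0) := by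
    intro i
    by_cases h : (i:ℕ) < k/2 + 1
    · have hp : dPred m k (Sum.inr i) := h
      rw [if_pos hp]
      simp only [dWeight, h, and_true]
    · have hp : ¬ dPred m k (Sum.inr i) := h
      rw [if_neg hp, if_neg (fun hc => h hc.2)]
  rw [Finset.sum_congr rfl (fun i _ => h2 i),
    Fin.sum_univ_eq_sum_range (fun i => if (j:ℕ) ≤ i ∧ i < k/2+1 then (1:ℝ≥0) else 0),
    count_nnreal]

lemma denom_inr (m : ℕ) (i : Fin (m+1)) (hi : 1 ≤ (i:ℕ)) :
    (∑ u, dWeight m u (Sum.inr i)) = 1 := by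
  rw [Fintype.sum_sum_type]
  have h1 : (∑ i' : Fin (m+1), dWeight m (Sum.inr i') (Sum.inr i)) = 0 := by
    simp [dWeight]
  rw [h1, add_zero]
  have h2 : ∀ i' : Fin m, dWeight m (Sum.inl i') (Sum.inr i)
      = (if (i':ℕ) = (i:ℕ) - 1 then (1:ℝ≥0) else 0) := by
    intro i'
    simp only [dWeight]
    exact if_congr (by omega) rfl rfl
  rw [Finset.sum_congr rfl (fun i' _ => h2 i'),
    Fin.sum_univ_eq_sum_range (fun i' => if i' = (i:ℕ) - 1 then (1:ℝ≥0) else 0),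
    Finset.sum_ite_eq' (Finset.range m) ((i:ℕ) - 1) (fun _ => (1:ℝ≥0)),
    if_pos (Finset.mem_range.mpr (by omega))]

lemma numer_inr (m k : ℕ) (i : Fin (m+1)) (hi : 1 ≤ (i:ℕ)) :
    (∑ u ∈ dSet m k, dWeight m u (Sum.inr i))
      = (if (i:ℕ) - 1 < (k+1)/2 then (1:ℝ≥0) else 0) := by
  rw [dSet, Finset.sum_filter, Fintype.sum_sum_type]
  have h1 : (∑ i' : Fin (m+1), if dPred m k (Sum.inr i')
      then dWeight m (Sum.inr i') (Sum.inr i) else 0) = 0 := by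
    apply Finset.sum_eq_zero
    intro i' _
    simp [dWeight]
  rw [h1, add_zero]
  have h2 : ∀ i' : Fin m, (if dPred m k (Sum.inl i')
        then dWeight m (Sum.inl i') (Sum.inr i) else 0)
      = (if ((i':ℕ) = (i:ℕ) - 1 ∧ (i':ℕ) < (k+1)/2) then (1:ℝ≥0) else 0) := by
    intro i'
    by_cases h : (i':ℕ) < (k+1)/2
    · have hp : dPred m k (Sum.inl i') := h
      rw [if_pos hp]
      simp only [dWeight]
      exact if_congr (by omega) rfl rfl
    · have hp : ¬ dPred m k (Sum.inl i') := h
      rw [if_neg hp, if_neg (fun hc => h hc.2)]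
  rw [Finset.sum_congr rfl (fun i' _ => h2 i'),
    Fin.sum_univ_eq_sum_range
      (fun i' => if (i' = (i:ℕ) - 1 ∧ i' < (k+1)/2) then (1:ℝ≥0) else 0)]
  by_cases hc : (i:ℕ) - 1 < (k+1)/2
  · rw [if_pos hc]
    have : ∀ i' ∈ Finset.range m, (if (i' = (i:ℕ) - 1 ∧ i' < (k+1)/2) then (1:ℝ≥0) else 0)
        = (if i' = (i:ℕ) - 1 then (1:ℝ≥0) else 0) := by
      intro i' _
      exact if_congr (by omega) rfl rfl
    rw [Finset.sum_congr rfl this,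
      Finset.sum_ite_eq' (Finset.range m) ((i:ℕ) - 1) (fun _ => (1:ℝ≥0)),
      if_pos (Finset.mem_range.mpr (by omega))]
  · rw [if_neg hc]
    apply Finset.sum_eq_zero
    intro i' _
    exact if_neg (by omega)


-- turnProb evaluations
lemma turn_white_inl (m k : ℕ) (j : Fin m) (hj : k/2 < (j:ℕ)) :
    turnProb (dWeight m) (dSet m k) (Sum.inl j) = 0 := by
  unfold turnProb
  rw [numer_inl]
  have : min (k/2+1) (m+1) - (j:ℕ) = 0 := by omega
  rw [this, Nat.cast_zero, zero_div]

lemma turn_white_inr (m k : ℕ) (i : Fin (m+1)) (hi : (k+1)/2 < (i:ℕ)) :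
    turnProb (dWeight m) (dSet m k) (Sum.inr i) = 0 := by
  unfold turnProb
  rw [numer_inr m k i (by omega), if_neg (by omega), zero_div]

lemma turn_pivot_even (m j : ℕ) (hj : j < m) :
    turnProb (dWeight m) (dSet m (2*j)) (Sum.inl ⟨j, hj⟩)
      = ((m + 1 - j : ℕ) : ℝ≥0)⁻¹ := by
  unfold turnProb
  rw [numer_inl, denom_inl]
  have : min (2*j/2+1) (m+1) - ((⟨j, hj⟩ : Fin m) : ℕ) = 1 := by
    simp only [Fin.val_mk]
    omega
  rw [this, Nat.cast_one, one_div]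

lemma turn_pivot_odd (m j : ℕ) (hj : j < m) :
    turnProb (dWeight m) (dSet m (2*j+1)) (Sum.inr ⟨j+1, by omega⟩) = 1 := by
  unfold turnProb
  rw [numer_inr m _ _ (by simp), denom_inr m _ (by simp), if_pos (by simp; omega)]
  simp

-- pivot definition facts
lemma pivot_not_mem_even (m j : ℕ) (hj : j < m) :
    Sum.inl (⟨j, hj⟩ : Fin m) ∉ dSet m (2*j) := by
  rw [mem_dSet_inl]
  simp only [Fin.val_mk]
  omega

lemma pivot_not_mem_odd (m j : ℕ) (hj : j < m) :
    Sum.inr (⟨j+1, by omega⟩ : Fin (m+1)) ∉ dSet m (2*j+1) := by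
  rw [mem_dSet_inr]
  simp only [Fin.val_mk]
  omega

lemma white_zero_even (m j : ℕ) (hj : j < m) :
    ∀ x, x ∉ dSet m (2*j) → x ≠ Sum.inl (⟨j, hj⟩ : Fin m) →
      turnProb (dWeight m) (dSet m (2*j)) x = 0 := by
  rintro (a | b) hx hne
  · rw [mem_dSet_inl] at hx
    apply turn_white_inl
    have : (a:ℕ) ≠ j := fun h => hne (by simp [Sum.inl.injEq, Fin.ext_iff, h])
    omega
  · rw [mem_dSet_inr] at hx
    apply turn_white_inr
    omega

lemma white_zero_odd (m j : ℕ) (hj : j < m) :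
    ∀ x, x ∉ dSet m (2*j+1) → x ≠ Sum.inr (⟨j+1, by omega⟩ : Fin (m+1)) →
      turnProb (dWeight m) (dSet m (2*j+1)) x = 0 := by
  rintro (a | b) hx hne
  · rw [mem_dSet_inl] at hx
    apply turn_white_inl
    omega
  · rw [mem_dSet_inr] at hx
    apply turn_white_inr
    have : (b:ℕ) ≠ j+1 := fun h => hne (by simp [Sum.inr.injEq, Fin.ext_iff, h])
    omega

lemma insert_pivot_even (m j : ℕ) (hj : j < m) :
    insert (Sum.inl (⟨j, hj⟩ : Fin m)) (dSet m (2*j)) = dSet m (2*j+1) := by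
  ext x
  rcases x with a | b
  · rw [Finset.mem_insert, mem_dSet_inl, mem_dSet_inl]
    simp only [Sum.inl.injEq, Fin.ext_iff, Fin.val_mk]
    omega
  · rw [Finset.mem_insert, mem_dSet_inr, mem_dSet_inr]
    simp only [reduceCtorEq, false_or]
    omega

lemma insert_pivot_odd (m j : ℕ) (hj : j < m) :
    insert (Sum.inr (⟨j+1, by omega⟩ : Fin (m+1))) (dSet m (2*j+1)) = dSet m (2*j+2) := by
  ext x
  rcases x with a | b
  · rw [Finset.mem_insert, mem_dSet_inl, mem_dSet_inl]
    simp only [reduceCtorEq, false_or]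
    omega
  · rw [Finset.mem_insert, mem_dSet_inr, mem_dSet_inr]
    simp only [Sum.inr.injEq, Fin.ext_iff, Fin.val_mk]
    omega

lemma dSet_zero (m : ℕ) :
    dSet m 0 = {Sum.inr (⟨0, by omega⟩ : Fin (m+1))} := by
  ext x
  rcases x with a | b
  · rw [mem_dSet_inl]
    simp
  · rw [mem_dSet_inr]
    simp only [Finset.mem_singleton, Sum.inr.injEq, Fin.ext_iff, Fin.val_mk]
    omega

lemma dSet_top (m : ℕ) : dSet m (2*m) = Finset.univ := by
  ext x
  rcases x with a | b
  · rw [mem_dSet_inl]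
    simp only [Finset.mem_univ, iff_true]
    omega
  · rw [mem_dSet_inr]
    simp only [Finset.mem_univ, iff_true]
    omega

lemma dSet_inj (m : ℕ) : ∀ k, k ≤ 2*m → ∀ l, l ≤ 2*m → dSet m k = dSet m l → k = l := by
  have aux : ∀ k l, k < l → l ≤ 2*m → dSet m k ≠ dSet m l := by
    intro k l hkl hl heq
    rcases Nat.even_or_odd l with ⟨c, hc⟩ | ⟨c, hc⟩
    · have hcm : c ≤ m := by omega
      have h1 : Sum.inr (⟨c, by omega⟩ : Fin (m+1)) ∈ dSet m l := by
        rw [mem_dSet_inr]; simp; omega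
      have h2 : Sum.inr (⟨c, by omega⟩ : Fin (m+1)) ∉ dSet m k := by
        rw [mem_dSet_inr]; simp; omega
      rw [heq] at h2; exact h2 h1
    · have hcm : c < m := by omega
      have h1 : Sum.inl (⟨c, hcm⟩ : Fin m) ∈ dSet m l := by
        rw [mem_dSet_inl]; simp; omega
      have h2 : Sum.inl (⟨c, hcm⟩ : Fin m) ∉ dSet m k := by
        rw [mem_dSet_inl]; simp; omega
      rw [heq] at h2; exact h2 h1
  intro k hk l hl heq
  rcases Nat.lt_trichotomy k l with h | h | h
  · exact absurd heq (aux k l h hl)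
  · exact h
  · exact absurd heq.symm (aux l k h hk)


-- the stage success probabilities
noncomputable def pFun (m : ℕ) : ℕ → ℝ≥0∞ :=
  fun k => if k % 2 = 0 then ((m + 1 - k/2 : ℕ) : ℝ≥0∞)⁻¹ else 1

lemma pFun_even (m j : ℕ) : pFun m (2*j) = ((m + 1 - j : ℕ) : ℝ≥0∞)⁻¹ := by
  simp only [pFun]
  rw [if_pos (by omega), show 2*j/2 = j from by omega]

lemma pFun_odd (m j : ℕ) : pFun m (2*j+1) = 1 := by
  simp only [pFun]
  rw [if_neg (by omega)]

lemma pFun_ne0 (m : ℕ) : ∀ k, k < 2*m → pFun m k ≠ 0 := by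
  intro k _
  simp only [pFun]
  by_cases h : k % 2 = 0
  · rw [if_pos h]
    exact ENNReal.inv_ne_zero.mpr (ENNReal.natCast_ne_top _)
  · rw [if_neg h]
    exact one_ne_zero

lemma pFun_le1 (m : ℕ) : ∀ k, k < 2*m → pFun m k ≤ 1 := by
  intro k hk
  simp only [pFun]
  by_cases h : k % 2 = 0
  · rw [if_pos h]
    exact ENNReal.inv_le_one.mpr (by exact_mod_cast (by omega : 1 ≤ m + 1 - k/2))
  · rw [if_neg h]

lemma coe_turn_even (m j : ℕ) (hj : j < m) :
    ((turnProb (dWeight m) (dSet m (2*j)) (Sum.inl ⟨j, hj⟩) : ℝ≥0) : ℝ≥0∞)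
      = pFun m (2*j) := by
  rw [turn_pivot_even m j hj, pFun_even,
    ENNReal.coe_inv (by exact_mod_cast (by omega : m + 1 - j ≠ 0)), ENNReal.coe_natCast]

lemma coe_turn_odd (m j : ℕ) (hj : j < m) :
    ((turnProb (dWeight m) (dSet m (2*j+1)) (Sum.inr ⟨j+1, by omega⟩) : ℝ≥0) : ℝ≥0∞)
      = pFun m (2*j+1) := by
  rw [turn_pivot_odd m j hj, pFun_odd, ENNReal.coe_one]

lemma step_self (m : ℕ) : ∀ k, k < 2*m →
    stepProb (dWeight m) (dSet m k) (dSet m k) = 1 - pFun m k := by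
  intro k hk
  rcases Nat.even_or_odd k with hpar | hpar
  · obtain ⟨j, rfl⟩ : ∃ j, k = 2*j := by obtain ⟨j, hj⟩ := hpar; exact ⟨j, by omega⟩
    have hj : j < m := by omega
    rw [stepProb_self_point (dWeight m) (dSet m (2*j)) _ (pivot_not_mem_even m j hj)
      (white_zero_even m j hj), coe_turn_even m j hj]
  · obtain ⟨j, rfl⟩ : ∃ j, k = 2*j+1 := by obtain ⟨j, hj⟩ := hpar; exact ⟨j, by omega⟩
    have hj : j < m := by omega
    rw [stepProb_self_point (dWeight m) (dSet m (2*j+1)) _ (pivot_not_mem_odd m j hj)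
      (white_zero_odd m j hj), coe_turn_odd m j hj]

lemma step_next (m : ℕ) : ∀ k, k < 2*m →
    stepProb (dWeight m) (dSet m k) (dSet m (k+1)) = pFun m k := by
  intro k hk
  rcases Nat.even_or_odd k with hpar | hpar
  · obtain ⟨j, rfl⟩ : ∃ j, k = 2*j := by obtain ⟨j, hj⟩ := hpar; exact ⟨j, by omega⟩
    have hj : j < m := by omega
    rw [← insert_pivot_even m j hj,
      stepProb_next_point (dWeight m) (dSet m (2*j)) _ (pivot_not_mem_even m j hj)
        (white_zero_even m j hj), coe_turn_even m j hj]
  · obtain ⟨j, rfl⟩ : ∃ j, k = 2*j+1 := by obtain ⟨j, hj⟩ := hpar; exact ⟨j, by omega⟩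
    have hj : j < m := by omega
    rw [show 2*j+1+1 = 2*j+2 from rfl, ← insert_pivot_odd m j hj,
      stepProb_next_point (dWeight m) (dSet m (2*j+1)) _ (pivot_not_mem_odd m j hj)
        (white_zero_odd m j hj), coe_turn_odd m j hj]

lemma step_other (m : ℕ) : ∀ k, k < 2*m → ∀ C, C ≠ dSet m k → C ≠ dSet m (k+1) →
    stepProb (dWeight m) (dSet m k) C = 0 := by
  intro k hk C hC1 hC2
  rcases Nat.even_or_odd k with hpar | hpar
  · obtain ⟨j, rfl⟩ : ∃ j, k = 2*j := by obtain ⟨j, hj⟩ := hpar; exact ⟨j, by omega⟩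
    have hj : j < m := by omega
    exact stepProb_other_point (dWeight m) (dSet m (2*j)) _ (pivot_not_mem_even m j hj)
      (white_zero_even m j hj) C hC1 (by rw [insert_pivot_even m j hj]; exact hC2)
  · obtain ⟨j, rfl⟩ : ∃ j, k = 2*j+1 := by obtain ⟨j, hj⟩ := hpar; exact ⟨j, by omega⟩
    have hj : j < m := by omega
    exact stepProb_other_point (dWeight m) (dSet m (2*j+1)) _ (pivot_not_mem_odd m j hj)
      (white_zero_odd m j hj) C hC1 (by rw [insert_pivot_odd m j hj]; exact hC2)

lemma dSet_zero' (m : ℕ) (i : Fin (m+1)) (hi : (i:ℕ) = 0) :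
    dSet m 0 = {Sum.inr i} := by
  rcases i with ⟨iv, hlt⟩
  simp only [Fin.val_mk] at hi
  subst hi
  exact dSet_zero m

-- arithmetic helpers
lemma evens_count (n : ℕ) :
    (∑ k ∈ Finset.range (2*n), if k % 2 = 0 then 1 else 0) = n := by
  induction n with
  | zero => simp
  | succ n ih =>
    rw [show 2*(n+1) = (2*n)+1+1 from by ring, Finset.sum_range_succ, Finset.sum_range_succ, ih]
    rw [if_pos (by omega), if_neg (by omega)]

lemma sum_f (m : ℕ) :
    (∑ k ∈ Finset.range (2*m), if k % 2 = 0 then m+1-k/2 else 1) = m*(m+5)/2 := by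
  induction m with
  | zero => simp
  | succ m ih =>
    rw [show 2*(m+1) = (2*m)+1+1 from by ring, Finset.sum_range_succ, Finset.sum_range_succ]
    have hsplit : ∀ k ∈ Finset.range (2*m),
        (if k % 2 = 0 then m+1+1-k/2 else 1)
          = (if k % 2 = 0 then m+1-k/2 else 1) + (if k % 2 = 0 then 1 else 0) := by
      intro k hk
      have := Finset.mem_range.mp hk
      by_cases h : k % 2 = 0 <;> simp [h] <;> omega
    rw [Finset.sum_congr rfl hsplit, Finset.sum_add_distrib, ih, evens_count]
    rw [if_pos (by omega), if_neg (by omega)]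
    have h1 : (2*m)/2 = m := by omega
    rw [h1]
    have heven : m*(m+5) % 2 = 0 := by
      rcases Nat.even_or_odd m with ⟨c, hc⟩ | ⟨c, hc⟩ <;> subst hc <;> ring_nf <;> omega
    have key : (m+1)*(m+1+5) = m*(m+5) + 2*(m+3) := by ring
    omega

lemma pinv_sum (m : ℕ) :
    (∑ k ∈ Finset.range (2*m), (pFun m k)⁻¹) = ((m*(m+5)/2 : ℕ) : ℝ≥0∞) := by
  have hterm : ∀ k ∈ Finset.range (2*m), (pFun m k)⁻¹
      = (((if k % 2 = 0 then m+1-k/2 else 1 : ℕ)) : ℝ≥0∞) := by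
    intro k _
    by_cases h : k % 2 = 0
    · simp only [pFun, if_pos h, inv_inv]
    · simp only [pFun, if_neg h, inv_one, Nat.cast_one]
  rw [Finset.sum_congr rfl hterm, ← Nat.cast_sum, sum_f]

-- reachability helpers
lemma no_edge_to_b0 (m : ℕ) (c : Fin m ⊕ Fin (m+1)) (i : Fin (m+1)) (hi : (i:ℕ) = 0) :
    ¬ 0 < dWeight m c (Sum.inr i) := by
  rcases c with a | b
  · simp [dWeight, hi]
  · simp [dWeight]

lemma reach_b0_eq (m : ℕ) (s : Fin m ⊕ Fin (m+1)) (i : Fin (m+1)) (hi : (i:ℕ) = 0)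
    (h : Relation.ReflTransGen (fun a b => 0 < dWeight m a b) s (Sum.inr i)) :
    s = Sum.inr i := by
  cases h with
  | refl => rfl
  | tail h1 h2 => exact absurd h2 (no_edge_to_b0 m _ i hi)

lemma reachB (m : ℕ) (hm : 1 ≤ m) : ∀ i, (h : i ≤ m) →
    Relation.ReflTransGen (fun a b => 0 < dWeight m a b)
      (Sum.inr (⟨0, by omega⟩ : Fin (m+1))) (Sum.inr (⟨i, by omega⟩ : Fin (m+1))) := by
  intro i
  induction i with
  | zero => intro _; exact Relation.ReflTransGen.refl
  | succ i ih =>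
    intro h
    have hA : Relation.ReflTransGen (fun a b => 0 < dWeight m a b)
        (Sum.inr (⟨0, by omega⟩ : Fin (m+1))) (Sum.inl (⟨i, by omega⟩ : Fin m)) := by
      refine Relation.ReflTransGen.tail (ih (by omega)) ?_
      simp [dWeight]
    refine Relation.ReflTransGen.tail hA ?_
    simp [dWeight]

lemma reachA (m : ℕ) (hm : 1 ≤ m) : ∀ j, (h : j < m) →
    Relation.ReflTransGen (fun a b => 0 < dWeight m a b)
      (Sum.inr (⟨0, by omega⟩ : Fin (m+1))) (Sum.inl (⟨j, h⟩ : Fin m)) := by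
  intro j h
  refine Relation.ReflTransGen.tail (reachB m hm j (by omega)) ?_
  simp [dWeight]

end RZFAux

/-- In the directed graph `D` above, `b₁` is the only vertex
with directed paths to all other vertices, and
`ept_rzf(D, b₁) = m + ∑_{i=1}^m (m + 2 - i) = m(m+5)/2`; in particular there
are directed graphs of order `n` whose minimum expected propagation time from
a single vertex is `Ω(n²)`. -/
theorem rzf_quadratic_construction (m : ℕ) (hm : 1 ≤ m) :
    (∀ s : Fin m ⊕ Fin (m + 1),
      (∀ x, Relation.ReflTransGen (fun a b => 0 < dWeight m a b) s x) ↔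
        s = Sum.inr (⟨0, by omega⟩ : Fin (m + 1))) ∧
    m + ∑ i ∈ Finset.Icc 1 m, (m + 2 - i) = m * (m + 5) / 2 ∧
    RZF.ept (dWeight m) {Sum.inr (⟨0, by omega⟩ : Fin (m + 1))} =
      ((m * (m + 5) / 2 : ℕ) : ℝ≥0∞) := by
  refine ⟨?_, ?_, ?_⟩
  · intro s
    constructor
    · intro h
      exact RZFAux.reach_b0_eq m s _ rfl (h _)
    · rintro rfl
      rintro (a | b)
      · have := RZFAux.reachA m hm (a:ℕ) a.isLt
        simpa using this
      · have := RZFAux.reachB m hm (b:ℕ) (by omega)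
        simpa using this
  · have e1 : ∑ i ∈ Finset.Icc 1 m, (m + 2 - i) = ∑ i ∈ Finset.range m, (m + 1 - i) := by
      rw [← Finset.Ico_add_one_right_eq_Icc, Finset.sum_Ico_eq_sum_range]
      exact Finset.sum_congr (by rw [Nat.add_sub_cancel]) (fun i _ => by omega)
    have e2 : ∑ i ∈ Finset.range m, (m + 1 - i) = ∑ i ∈ Finset.range m, (i + 2) := by
      rw [← Finset.sum_range_reflect (fun j => j + 2) m]
      exact Finset.sum_congr rfl (fun i hi => by
        have := Finset.mem_range.mp hi; omega)
    have e3 : (∑ i ∈ Finset.range m, i) * 2 = m * (m - 1) := Finset.sum_range_id_mul_two m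
    have e4 : ∑ i ∈ Finset.range m, (i + 2) = (∑ i ∈ Finset.range m, i) + 2 * m := by
      rw [Finset.sum_add_distrib, Finset.sum_const, Finset.card_range, smul_eq_mul]
      ring
    have key : m*(m+5) = m*(m-1) + 6*m := by
      rcases m with _ | n
      · rfl
      · simp only [Nat.succ_sub_one]
        ring
    rw [e1, e2, e4]
    omega
  · have hchain := RZFAux.ept_chain (dWeight m) (2*m) (RZFAux.dSet m) (RZFAux.pFun m)
      (RZFAux.dSet_top m) (RZFAux.dSet_inj m) (RZFAux.pFun_ne0 m) (RZFAux.pFun_le1 m)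
      (RZFAux.step_self m) (RZFAux.step_next m) (RZFAux.step_other m)
    rw [RZFAux.dSet_zero' m ⟨0, by omega⟩ rfl] at hchain
    exact hchain.trans (RZFAux.pinv_sum m)
end

section
/- Let G be a strongly connected directed graph containing two vertex-disjoint forts F₁ and F₂, where a fort is a nonempty subset F of vertices such that every vertex of F has at least one in-neighbor in F. Then for every k ∈ ℕ there exists an assignment of positive weights to the edges of G such that ept_rzf(G) > k; that is, the expected propagation time can be made arbitrarily large by the choice of weights. -/
open scoped ENNReal NNReal

set_option linter.unusedSectionVars false

namespace RZF

variable {V : Type*} [Fintype V] [DecidableEq V]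

lemma turnProb_le_one (w : V → V → ℝ≥0) (B : Finset V) (x : V) :
    turnProb w B x ≤ 1 := by
  unfold turnProb
  rcases eq_or_ne (∑ u, w u x) 0 with h | h
  · simp [h]
  · rw [div_le_one (pos_iff_ne_zero.mpr h)]
    exact Finset.sum_le_sum_of_subset (Finset.subset_univ B)

lemma step_sum_disjoint (w : V → V → ℝ≥0) (B F : Finset V) (hBF : Disjoint B F) :
    ∑ C ∈ Finset.univ.filter (fun C : Finset V => Disjoint C F), stepProb w B C
      = ∏ x ∈ F, (1 - (turnProb w B x : ℝ≥0∞)) := by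
  classical
  set p : V → ℝ≥0∞ := fun x => (turnProb w B x : ℝ≥0∞) with hp
  have hstep : ∀ C : Finset V, stepProb w B C =
      if B ⊆ C then (∏ x ∈ C \ B, p x) * ∏ x ∈ Cᶜ, (1 - p x) else 0 := fun C => rfl
  have h1 : ∑ C ∈ Finset.univ.filter (fun C : Finset V => Disjoint C F), stepProb w B C
      = ∑ C ∈ (Finset.univ.filter (fun C : Finset V => Disjoint C F)).filter
          (fun C => B ⊆ C), (∏ x ∈ C \ B, p x) * ∏ x ∈ Cᶜ, (1 - p x) := by
    rw [Finset.sum_filter (fun C => B ⊆ C)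
      (fun C => (∏ x ∈ C \ B, p x) * ∏ x ∈ Cᶜ, (1 - p x))]
    exact Finset.sum_congr rfl fun C _ => hstep C

  rw [h1]
  have h2 : ∑ C ∈ (Finset.univ.filter (fun C : Finset V => Disjoint C F)).filter
          (fun C => B ⊆ C), (∏ x ∈ C \ B, p x) * ∏ x ∈ Cᶜ, (1 - p x)
      = ∑ t ∈ (Bᶜ \ F).powerset,
          ((∏ x ∈ t, p x) * ∏ x ∈ (Bᶜ \ F) \ t, (1 - p x)) * ∏ x ∈ F, (1 - p x) := by
    refine Finset.sum_nbij' (fun C => C \ B) (fun t => B ∪ t) ?_ ?_ ?_ ?_ ?_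
    · intro C hC
      simp only [Finset.mem_filter, Finset.mem_univ, true_and] at hC
      rw [Finset.mem_powerset]
      intro x hx
      rw [Finset.mem_sdiff] at hx ⊢
      refine ⟨Finset.mem_compl.2 hx.2, fun hxF => ?_⟩
      exact (Finset.disjoint_left.1 hC.1) hx.1 hxF
    · intro t ht
      rw [Finset.mem_powerset] at ht
      simp only [Finset.mem_filter, Finset.mem_univ, true_and]
      refine ⟨Finset.disjoint_union_left.2 ⟨hBF, ?_⟩, Finset.subset_union_left⟩
      exact Finset.disjoint_left.2 fun x hx hxF => ((Finset.mem_sdiff.1 (ht hx)).2 hxF)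
    · intro C hC
      simp only [Finset.mem_filter, Finset.mem_univ, true_and] at hC
      exact Finset.union_sdiff_of_subset hC.2
    · intro t ht
      rw [Finset.mem_powerset] at ht
      show (B ∪ t) \ B = t
      rw [Finset.union_sdiff_left]
      exact Finset.sdiff_eq_self_of_disjoint
        (Finset.disjoint_left.2 fun x hx hxB => (Finset.mem_compl.1 (Finset.mem_sdiff.1 (ht hx)).1) hxB)
    · intro C hC
      simp only [Finset.mem_filter, Finset.mem_univ, true_and] at hC
      obtain ⟨hCF, hBC⟩ := hC
      have hcompl : Cᶜ = Bᶜ \ (C \ B) := by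
        ext x
        simp only [Finset.mem_compl, Finset.mem_sdiff]
        constructor
        · intro hx; exact ⟨fun hxB => hx (hBC hxB), fun h => hx h.1⟩
        · intro hx hxC
          rcases Finset.mem_union.1 ((Finset.union_sdiff_of_subset hBC).symm ▸ hxC) with h | h
          · exact hx.1 h
          · exact hx.2 ⟨hxC, hx.1⟩
      have hF : F ⊆ Bᶜ \ (C \ B) := by
        intro x hxF
        rw [Finset.mem_sdiff, Finset.mem_compl, Finset.mem_sdiff]
        refine ⟨fun hxB => Finset.disjoint_left.1 hBF hxB hxF, fun h => ?_⟩
        exact Finset.disjoint_left.1 hCF h.1 hxF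
      have hsplit : ∏ x ∈ Cᶜ, (1 - p x)
          = (∏ x ∈ (Bᶜ \ (C \ B)) \ F, (1 - p x)) * ∏ x ∈ F, (1 - p x) := by
        rw [hcompl, Finset.prod_sdiff hF]
      have hcomm : (Bᶜ \ (C \ B)) \ F = (Bᶜ \ F) \ (C \ B) := by
        ext x
        simp only [Finset.mem_sdiff]
        tauto
      rw [hsplit, hcomm, mul_assoc]
  rw [h2, ← Finset.sum_mul]
  have h3 : ∑ t ∈ (Bᶜ \ F).powerset,
      (∏ x ∈ t, p x) * ∏ x ∈ (Bᶜ \ F) \ t, (1 - p x) = 1 := by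
    rw [← Finset.prod_add]
    refine Finset.prod_eq_one fun x _ => ?_
    have hx1 : p x ≤ 1 := by
      simp only [hp]
      exact_mod_cast turnProb_le_one w B x
    exact add_tsub_cancel_of_le hx1
  rw [h3, one_mul]




lemma one_sub_mul_le_pow (ε : ℝ≥0∞) : ∀ m : ℕ, 1 - m * ε ≤ (1 - ε) ^ m
  | 0 => by simp
  | m + 1 => by
    have h1 : ((m : ℝ≥0∞) + 1) * ε = m * ε + ε := by ring
    have key : (1 : ℝ≥0∞) - (m * ε + ε) ≤ (1 - m * ε) * (1 - ε) := by
      set a := (m : ℝ≥0∞) * ε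
      have h2 : (1 - a) * (1 - ε) = (1 - a) - (1 - a) * ε := by
        rw [ENNReal.mul_sub (fun _ _ => (tsub_le_self.trans_lt ENNReal.one_lt_top).ne), mul_one]
      rw [h2, ← tsub_tsub]
      exact tsub_le_tsub_left (mul_le_of_le_one_left zero_le tsub_le_self) _
    calc (1 : ℝ≥0∞) - (m + 1 : ℕ) * ε = 1 - (m * ε + ε) := by push_cast [h1]; rfl
      _ ≤ (1 - m * ε) * (1 - ε) := key
      _ ≤ (1 - ε) ^ m * (1 - ε) := mul_le_mul_left (one_sub_mul_le_pow ε m) _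
      _ = (1 - ε) ^ (m + 1) := (pow_succ _ _).symm

lemma state_disjoint_ge (w : V → V → ℝ≥0) (v : V) (F : Finset V) (hv : v ∉ F)
    (ε : ℝ≥0)
    (hε : ∀ B : Finset V, Disjoint B F → ∀ x ∈ F, turnProb w B x ≤ ε) :
    ∀ t : ℕ, ((1 : ℝ≥0∞) - ε) ^ (F.card * t)
      ≤ ∑ C ∈ Finset.univ.filter (fun C : Finset V => Disjoint C F), state w {v} t C
  | 0 => by
    have hmem : ({v} : Finset V) ∈ Finset.univ.filter (fun C : Finset V => Disjoint C F) := by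
      simp [Finset.disjoint_singleton_left, hv]
    have : ∑ C ∈ Finset.univ.filter (fun C : Finset V => Disjoint C F),
        state w {v} 0 C = 1 := by
      rw [Finset.sum_eq_single_of_mem ({v} : Finset V) hmem]
      · simp [state]
      · intro C _ hC
        simp [state, hC]
    simp [this]
  | t + 1 => by
    have hrec : ∑ C ∈ Finset.univ.filter (fun C : Finset V => Disjoint C F),
        state w {v} (t + 1) C
        = ∑ B : Finset V, state w {v} t B *
            ∑ C ∈ Finset.univ.filter (fun C : Finset V => Disjoint C F), stepProb w B C := by
      simp only [state]
      rw [Finset.sum_comm]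
      exact Finset.sum_congr rfl fun B _ => (Finset.mul_sum _ _ _).symm
    rw [hrec]
    have hsub : ∑ B ∈ Finset.univ.filter (fun B : Finset V => Disjoint B F),
        state w {v} t B * ((1 : ℝ≥0∞) - ε) ^ F.card
        ≤ ∑ B : Finset V, state w {v} t B *
            ∑ C ∈ Finset.univ.filter (fun C : Finset V => Disjoint C F), stepProb w B C := by
      refine le_trans (Finset.sum_le_sum ?_) (Finset.sum_le_sum_of_subset (Finset.filter_subset _ _))
      intro B hB
      rw [Finset.mem_filter] at hB
      rw [step_sum_disjoint w B F hB.2]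
      refine mul_le_mul_right ?_ _
      rw [← Finset.prod_const]
      refine Finset.prod_le_prod' fun x hx => ?_
      exact tsub_le_tsub_left (by exact_mod_cast hε B hB.2 x hx) _
    refine le_trans ?_ hsub
    rw [← Finset.sum_mul]
    calc ((1:ℝ≥0∞) - ε) ^ (F.card * (t + 1))
        = ((1:ℝ≥0∞) - ε) ^ (F.card * t) * ((1:ℝ≥0∞) - ε) ^ F.card := by
          rw [← pow_add]; ring_nf
      _ ≤ (∑ B ∈ Finset.univ.filter (fun B : Finset V => Disjoint B F), state w {v} t B)
            * ((1:ℝ≥0∞) - ε) ^ F.card :=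
          mul_le_mul_left (state_disjoint_ge w v F hv ε hε t) _

lemma turnProb_le (w : V → V → ℝ≥0) (F : Finset V) (N : ℝ≥0) (hN : 0 < N)
    (hout : ∀ u x, x ∈ F → u ∉ F → w u x ≤ 1)
    (hin : ∀ x ∈ F, ∃ u, N ≤ w u x) :
    ∀ B : Finset V, Disjoint B F → ∀ x ∈ F, turnProb w B x ≤ (Fintype.card V : ℝ≥0) / N := by
  intro B hBF x hx
  obtain ⟨u₀, hu₀⟩ := hin x hx
  have hden : N ≤ ∑ u, w u x :=
    hu₀.trans (Finset.single_le_sum (f := fun u => w u x) (fun i _ => zero_le)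
      (Finset.mem_univ u₀))
  have hnum : ∑ u ∈ B, w u x ≤ (Fintype.card V : ℝ≥0) := by
    calc ∑ u ∈ B, w u x ≤ ∑ _u ∈ B, (1 : ℝ≥0) :=
          Finset.sum_le_sum fun u hu =>
            hout u x hx (fun huF => Finset.disjoint_left.1 hBF hu huF)
      _ = (B.card : ℝ≥0) := by simp
      _ ≤ (Fintype.card V : ℝ≥0) := by
          exact_mod_cast Nat.cast_le.2 (Finset.card_le_univ B)
  exact div_le_div₀ zero_le hnum hN hden

lemma ept_ge (w : V → V → ℝ≥0) (v : V) (F : Finset V) (hv : v ∉ F) (hF : F.Nonempty)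
    (ε : ℝ≥0) (hε : ∀ B : Finset V, Disjoint B F → ∀ x ∈ F, turnProb w B x ≤ ε) (k : ℕ) :
    ((k : ℝ≥0∞) + 1) * ((1 : ℝ≥0∞) - ε) ^ (F.card * k) ≤ ept w {v} := by
  have hsub : Finset.univ.filter (fun C : Finset V => Disjoint C F)
      ⊆ Finset.univ.filter (fun C : Finset V => C ≠ Finset.univ) := by
    intro C hC
    rw [Finset.mem_filter] at hC ⊢
    refine ⟨hC.1, fun hCuniv => ?_⟩
    obtain ⟨x, hxF⟩ := hF
    exact Finset.disjoint_left.1 hC.2 (hCuniv ▸ Finset.mem_univ x) hxF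
  have hterm : ∀ t : ℕ, t ≤ k → ((1 : ℝ≥0∞) - ε) ^ (F.card * k)
      ≤ ∑ C ∈ Finset.univ.filter (fun C : Finset V => C ≠ Finset.univ), state w {v} t C := by
    intro t ht
    calc ((1 : ℝ≥0∞) - ε) ^ (F.card * k) ≤ ((1 : ℝ≥0∞) - ε) ^ (F.card * t) :=
          pow_le_pow_of_le_one zero_le tsub_le_self (Nat.mul_le_mul_left _ ht)
      _ ≤ ∑ C ∈ Finset.univ.filter (fun C : Finset V => Disjoint C F), state w {v} t C :=
          state_disjoint_ge w v F hv ε hε t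
      _ ≤ _ := Finset.sum_le_sum_of_subset hsub
  calc ((k : ℝ≥0∞) + 1) * ((1 : ℝ≥0∞) - ε) ^ (F.card * k)
      = ∑ _t ∈ Finset.range (k + 1), ((1 : ℝ≥0∞) - ε) ^ (F.card * k) := by
        rw [Finset.sum_const, Finset.card_range, nsmul_eq_mul]
        push_cast
        ring
    _ ≤ ∑ t ∈ Finset.range (k + 1),
          ∑ C ∈ Finset.univ.filter (fun C : Finset V => C ≠ Finset.univ), state w {v} t C :=
        Finset.sum_le_sum fun t ht => hterm t (Nat.lt_succ_iff.1 (Finset.mem_range.1 ht))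
    _ ≤ ept w {v} := ENNReal.sum_le_tsum _

lemma num_lt (k : ℕ) (b : ℝ≥0∞) (hb : 1 - (2 * ((k : ℝ≥0∞) + 1))⁻¹ ≤ b) :
    (k : ℝ≥0∞) < ((k : ℝ≥0∞) + 1) * b := by
  have hk1 : ((k : ℝ≥0∞) + 1) ≠ 0 := (lt_of_lt_of_le one_pos le_add_self).ne'
  have hk2 : ((k : ℝ≥0∞) + 1) ≠ ∞ := by
    simp [ENNReal.add_ne_top]
  have hc : ((k : ℝ≥0∞) + 1) * (2 * ((k : ℝ≥0∞) + 1))⁻¹ = 2⁻¹ := by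
    rw [ENNReal.mul_inv (Or.inl two_ne_zero) (Or.inl (by simp)), ← mul_assoc,
      mul_comm ((k : ℝ≥0∞) + 1) 2⁻¹, mul_assoc, ENNReal.mul_inv_cancel hk1 hk2, mul_one]
  have key : (k : ℝ≥0∞) < ((k : ℝ≥0∞) + 1) * (1 - (2 * ((k : ℝ≥0∞) + 1))⁻¹) := by
    rw [ENNReal.mul_sub (fun _ _ => hk2), mul_one, hc]
    rw [(ENNReal.cancel_of_ne (by simp : (2 : ℝ≥0∞)⁻¹ ≠ ∞)).lt_tsub_iff_right]
    exact ENNReal.add_lt_add_left (ENNReal.natCast_ne_top k)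
      (ENNReal.inv_lt_one.2 ENNReal.one_lt_two)
  exact key.trans_le (mul_le_mul_right hb _)
end RZF

/-- Let `G` be a strongly connected directed graph
containing two vertex-disjoint forts `F₁, F₂` (a fort is a nonempty vertex set
each of whose vertices has an in-neighbor in the set). Then for every `k`
there is an assignment of positive weights to the edges of `G` under which the
minimum expected propagation time exceeds `k`. -/
theorem rzf_forts_arbitrarily_slow {V : Type*} [Fintype V] [DecidableEq V]
    (adj : V → V → Prop)
    (hsc : ∀ u v : V, Relation.ReflTransGen adj u v)
    (F₁ F₂ : Finset V) (h1 : F₁.Nonempty) (h2 : F₂.Nonempty)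
    (hdisj : Disjoint F₁ F₂)
    (hf1 : ∀ x ∈ F₁, ∃ u ∈ F₁, adj u x)
    (hf2 : ∀ x ∈ F₂, ∃ u ∈ F₂, adj u x) :
    ∀ k : ℕ, ∃ w : V → V → ℝ≥0,
      (∀ u v : V, 0 < w u v ↔ adj u v) ∧ (k : ℝ≥0∞) < RZF.eptMin w := by
  intro k
  classical
  set n := Fintype.card V with hn
  set M := n * k with hM
  set N : ℕ := 2 * (k + 1) * n * M + 1 with hNdef
  set w : V → V → ℝ≥0 := fun u v =>
    if adj u v then (if (u ∈ F₁ ∧ v ∈ F₁) ∨ (u ∈ F₂ ∧ v ∈ F₂) then (N : ℝ≥0) else 1)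
    else 0 with hw
  have hNpos : (0 : ℝ≥0) < (N : ℝ≥0) := by
    exact_mod_cast Nat.succ_pos (2 * (k + 1) * n * M)
  set ε : ℝ≥0 := (n : ℝ≥0) / (N : ℝ≥0) with hεdef
  refine ⟨w, ?_, ?_⟩
  · intro u v
    constructor
    · intro h
      by_contra hadj
      simp [hw, hadj] at h
    · intro h
      simp only [hw, if_pos h]
      split_ifs with h2'
      · exact hNpos
      · exact one_pos
  -- bounds on turnProb for each fort
  have hout1 : ∀ u x, x ∈ F₁ → u ∉ F₁ → w u x ≤ 1 := by
    intro u x hx hu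
    by_cases ha : adj u x
    · have hc : ¬((u ∈ F₁ ∧ x ∈ F₁) ∨ (u ∈ F₂ ∧ x ∈ F₂)) := by
        rintro (⟨hu', _⟩ | ⟨_, hx'⟩)
        · exact hu hu'
        · exact Finset.disjoint_left.1 hdisj hx hx'
      simp [hw, ha, hc]
    · simp [hw, ha]
  have hout2 : ∀ u x, x ∈ F₂ → u ∉ F₂ → w u x ≤ 1 := by
    intro u x hx hu
    by_cases ha : adj u x
    · have hc : ¬((u ∈ F₁ ∧ x ∈ F₁) ∨ (u ∈ F₂ ∧ x ∈ F₂)) := by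
        rintro (⟨_, hx'⟩ | ⟨hu', _⟩)
        · exact Finset.disjoint_left.1 hdisj hx' hx
        · exact hu hu'
      simp [hw, ha, hc]
    · simp [hw, ha]
  have hin1 : ∀ x ∈ F₁, ∃ u, (N : ℝ≥0) ≤ w u x := by
    intro x hx
    obtain ⟨u, huF, hadj⟩ := hf1 x hx
    have : w u x = (N : ℝ≥0) := by simp [hw, hadj, huF, hx]
    exact ⟨u, this.ge⟩
  have hin2 : ∀ x ∈ F₂, ∃ u, (N : ℝ≥0) ≤ w u x := by
    intro x hx
    obtain ⟨u, huF, hadj⟩ := hf2 x hx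
    have : w u x = (N : ℝ≥0) := by simp [hw, hadj, huF, hx]
    exact ⟨u, this.ge⟩
  have hb1 : ∀ B : Finset V, Disjoint B F₁ → ∀ x ∈ F₁, RZF.turnProb w B x ≤ ε :=
    RZF.turnProb_le w F₁ (N : ℝ≥0) hNpos (hout1) hin1
  have hb2 : ∀ B : Finset V, Disjoint B F₂ → ∀ x ∈ F₂, RZF.turnProb w B x ≤ ε :=
    RZF.turnProb_le w F₂ (N : ℝ≥0) hNpos (hout2) hin2
  -- numeric bound
  have hMεnn : (M : ℝ≥0) * ε ≤ (2 * ((k : ℝ≥0) + 1))⁻¹ := by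
    have h2pos : (0 : ℝ≥0) < 2 * ((k : ℝ≥0) + 1) := by positivity
    rw [hεdef, mul_div_assoc', ← one_div, div_le_div_iff₀ hNpos h2pos]
    have hnat : (M * n) * (2 * (k + 1)) ≤ N := by
      rw [hNdef]
      nlinarith [Nat.zero_le (2 * (k + 1) * n * M)]
    calc (M : ℝ≥0) * (n : ℝ≥0) * (2 * ((k : ℝ≥0) + 1)) = ((M * n * (2 * (k + 1)) : ℕ) : ℝ≥0) := by
          push_cast; ring
      _ ≤ ((N : ℕ) : ℝ≥0) := by exact_mod_cast hnat
      _ = 1 * (N : ℝ≥0) := by rw [one_mul]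
  have hMε : (M : ℝ≥0∞) * (ε : ℝ≥0∞) ≤ (2 * ((k : ℝ≥0∞) + 1))⁻¹ := by
    have h0 : (2 * ((k : ℝ≥0) + 1)) ≠ 0 := by positivity
    calc (M : ℝ≥0∞) * (ε : ℝ≥0∞) = (((M : ℝ≥0) * ε : ℝ≥0) : ℝ≥0∞) := by push_cast; ring
      _ ≤ (((2 * ((k : ℝ≥0) + 1))⁻¹ : ℝ≥0) : ℝ≥0∞) := ENNReal.coe_le_coe.2 hMεnn
      _ = (2 * ((k : ℝ≥0∞) + 1))⁻¹ := by rw [ENNReal.coe_inv h0]; push_cast; ring_nf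
  have hbM : 1 - (2 * ((k : ℝ≥0∞) + 1))⁻¹ ≤ ((1 : ℝ≥0∞) - ε) ^ M :=
    le_trans (tsub_le_tsub_left hMε _) (RZF.one_sub_mul_le_pow _ M)
  set c : ℝ≥0∞ := ((k : ℝ≥0∞) + 1) * ((1 : ℝ≥0∞) - ε) ^ M with hc
  have hkc : (k : ℝ≥0∞) < c := RZF.num_lt k _ hbM
  have hvc : ∀ v : V, c ≤ RZF.ept w {v} := by
    intro v
    by_cases hv1 : v ∈ F₁
    · have hv2 : v ∉ F₂ := fun hv2 => Finset.disjoint_left.1 hdisj hv1 hv2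
      refine le_trans ?_ (RZF.ept_ge w v F₂ hv2 h2 ε hb2 k)
      refine mul_le_mul_right ?_ _
      refine pow_le_pow_of_le_one zero_le tsub_le_self ?_
      exact Nat.mul_le_mul_right k (Finset.card_le_univ F₂)
    · refine le_trans ?_ (RZF.ept_ge w v F₁ hv1 h1 ε hb1 k)
      refine mul_le_mul_right ?_ _
      refine pow_le_pow_of_le_one zero_le tsub_le_self ?_
      exact Nat.mul_le_mul_right k (Finset.card_le_univ F₁)
  exact lt_of_lt_of_le hkc (le_iInf hvc)
end
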